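/- If a 3×3 complex matrix S satisfies (trace(S Sᵀ) I − 2 S Sᵀ)² S = 0 and S is invertible, then a contradiction follows; hence det S = 0. -/

import Mathlib

open Matrix

theorem stmt_7 (S : Matrix (Fin 3) (Fin 3) ℂ)
    (h : ((S * Sᵀ).trace • (1 : Matrix (Fin 3) (Fin 3) ℂ) - (2 : ℂ) • (S * Sᵀ)) ^ 2 * S = 0) :
    (IsUnit S → False) ∧ S.det = 0 := by
  have key : IsUnit S → False := by
    intro hu
    set A := S * Sᵀ with hA
    set t := A.trace with ht
    set M := t • (1 : Matrix (Fin 3) (Fin 3) ℂ) - (2 : ℂ) • A with hM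
    have hdet : IsUnit S.det := (Matrix.isUnit_iff_isUnit_det S).mp hu
    have hM2 : M ^ 2 = 0 := by
      have : M ^ 2 * (S * S⁻¹) = 0 := by
        rw [← Matrix.mul_assoc, h, Matrix.zero_mul]
      rwa [Matrix.mul_nonsing_inv S hdet, Matrix.mul_one] at this
    have hnil : IsNilpotent M := ⟨2, hM2⟩
    have htr : M.trace = 0 :=
      (Matrix.isNilpotent_trace_of_isNilpotent hnil).eq_zero
    have ht0 : t = 0 := by
      have : M.trace = t := by
        simp [hM, Matrix.trace_sub, Matrix.trace_smul, Matrix.trace_one, ← ht]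
        ring
      rw [htr] at this
      exact this.symm
    have hA2 : A ^ 2 = 0 := by
      have : M = (-2 : ℂ) • A := by rw [hM, ht0]; simp
      rw [this, smul_pow] at hM2
      have h4 : ((-2 : ℂ) ^ 2) ≠ 0 := by norm_num
      exact (smul_eq_zero.mp hM2).resolve_left h4
    have hdA : A.det = 0 := by
      have : A.det ^ 2 = 0 := by rw [← Matrix.det_pow, hA2, Matrix.det_zero]
      exact pow_eq_zero_iff (by norm_num) |>.mp this
    have : S.det * S.det = 0 := by
      have h2 : A.det = S.det * S.det := by
        rw [hA, Matrix.det_mul, Matrix.det_transpose]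
      rw [← h2, hdA]
    exact hdet.ne_zero (by rcases mul_eq_zero.mp this with h' | h' <;> simpa using h')
  refine ⟨key, ?_⟩
  by_contra hd
  exact key ((Matrix.isUnit_iff_isUnit_det S).mpr (Ne.isUnit hd))
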